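/- Let w be a word of length k over an alphabet Σ with autocorrelation b_k, b_{k-1}, …, b_1, and suppose there exists an index 1 ≤ i ≤ k−1 with b_i = 1; let i_m = max{ i : b_i = 1, 1 ≤ i ≤ k−1 }. Then: (a) for every 1 ≤ i ≤ k−1 with b_i = 1, either i < k − i_m or i = k − m·(k − i_m) for some positive integer m; and (b) conversely, if 1 ≤ i ≤ k−1 and i = k − m·(k − i_m) for some positive integer m, then b_i = 1. -/

import Mathlib

/-- The `i`-th autocorrelation bit `b_i` of a word `w` (for `1 ≤ i ≤ w.length`):
`1` if the prefix of `w` of length `i` equals the suffix of `w` of length `i`, else `0`. -/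
def acorrBit {α : Type*} [DecidableEq α] (w : List α) (i : ℕ) : ℕ :=
  if w.take i = w.drop (w.length - i) then 1 else 0

/-- The inverse autocorrelation polynomial `A_w(x) = ∑_{i=1}^k b_i x^(i-1)`, over `ℝ`. -/
noncomputable def APolyR {α : Type*} [DecidableEq α] (w : List α) : Polynomial ℝ :=
  ∑ i ∈ Finset.range w.length, Polynomial.C (acorrBit w (i + 1) : ℝ) * Polynomial.X ^ i

/-- The inverse autocorrelation polynomial `A_w(x)`, over `ℂ`. -/
noncomputable def APolyC {α : Type*} [DecidableEq α] (w : List α) : Polynomial ℂ :=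
  ∑ i ∈ Finset.range w.length, Polynomial.C (acorrBit w (i + 1) : ℂ) * Polynomial.X ^ i

/-- The recurrence polynomial `P_w(x) = 1 + (x - q)·A_w(x)`, over `ℝ`. -/
noncomputable def PPolyR (q : ℕ) {α : Type*} [DecidableEq α] (w : List α) : Polynomial ℝ :=
  1 + (Polynomial.X - Polynomial.C (q : ℝ)) * APolyR w

/-- The recurrence polynomial `P_w(x) = 1 + (x - q)·A_w(x)`, over `ℂ`. -/
noncomputable def PPolyC (q : ℕ) {α : Type*} [DecidableEq α] (w : List α) : Polynomial ℂ :=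
  1 + (Polynomial.X - Polynomial.C (q : ℂ)) * APolyC w

/-- `h_w(n)`: the number of words of length `n` over `Fin q` whose last `w.length` letters
equal `w` and which contain no other occurrence of `w` as consecutive letters. -/
noncomputable def hitCount (q : ℕ) (w : List (Fin q)) (n : ℕ) : ℕ :=
  Nat.card {l : List (Fin q) // l.length = n ∧ l.drop (n - w.length) = w ∧
    ∀ p < n - w.length, (l.drop p).take w.length ≠ w}

/-- The first hitting probability `P_h(w,n) = h_w(n+k)/q^(n+k)` where `k = w.length`. -/
noncomputable def hitProb (q : ℕ) (w : List (Fin q)) (n : ℕ) : ℝ :=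
  (hitCount q w (n + w.length) : ℝ) / (q : ℝ) ^ (n + w.length)

/-- The constant `C_{w/w'} = ln(1+r)/r` with `r = (A_w(q) − A_{w'}(q))/A_{w'}(q)`. -/
noncomputable def Crat (q : ℕ) (w w' : List (Fin q)) : ℝ :=
  Real.log (1 + ((APolyR w).eval (q : ℝ) - (APolyR w').eval (q : ℝ)) / (APolyR w').eval (q : ℝ)) /
    (((APolyR w).eval (q : ℝ) - (APolyR w').eval (q : ℝ)) / (APolyR w').eval (q : ℝ))

/-- The partial-fraction coefficient `c_w = 1/P_w'(α_m)`. -/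
noncomputable def cwCoef (q : ℕ) (w : List (Fin q)) (αm : ℝ) : ℝ :=
  1 / ((PPolyR q w).derivative.eval αm)


def HasPer {α : Type*} (w : List α) (p : ℕ) : Prop :=
  ∀ j : ℕ, j + p < w.length → w[j]? = w[j + p]?

lemma border_iff_per {α : Type*} (w : List α) (i : ℕ) (h : i ≤ w.length) :
    w.take i = w.drop (w.length - i) ↔ HasPer w (w.length - i) := by
  constructor
  · intro heq j hj
    have hji : j < i := by omega
    have h1 : (w.take i)[j]? = w[j]? := by
      rw [List.getElem?_take]; simp [hji]
    have h2 : (w.drop (w.length - i))[j]? = w[w.length - i + j]? := List.getElem?_drop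
    rw [heq] at h1
    rw [← h1, h2, Nat.add_comm]
  · intro hp
    apply List.ext_getElem?
    intro n
    rw [List.getElem?_take, List.getElem?_drop]
    by_cases hn : n < i
    · rw [if_pos hn]
      rw [Nat.add_comm]
      exact hp n (by omega)
    · rw [if_neg hn]
      symm
      apply List.getElem?_eq_none
      omega

lemma per_mul {α : Type*} (w : List α) (p m : ℕ) (hp : HasPer w p) :
    HasPer w (m * p) := by
  induction m with
  | zero => intro j hj; simp
  | succ m ih =>
    intro j hj
    have hs : (m + 1) * p = m * p + p := by ring
    have h1 : j + p < w.length := by omega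
    have h2 : (j + p) + m * p < w.length := by omega
    calc w[j]? = w[j + p]? := hp j h1
    _ = w[(j + p) + m * p]? := ih (j + p) h2
    _ = w[j + (m + 1) * p]? := by ring_nf

lemma per_sub {α : Type*} (w : List α) (p q : ℕ) (hpq : p ≤ q) (hk : p + q ≤ w.length)
    (hp : HasPer w p) (hq : HasPer w q) : HasPer w (q - p) := by
  intro j hj
  by_cases hcase : j + q < w.length
  · have h1 : j + (q - p) + p < w.length := by omega
    have : w[j + (q - p)]? = w[j + (q - p) + p]? := hp _ h1
    rw [this]
    have : j + (q - p) + p = j + q := by omega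
    rw [this]
    exact hq j hcase
  · have hjp : p ≤ j := by omega
    have h1 : (j - p) + p < w.length := by omega
    have h2 : (j - p) + q < w.length := by omega
    have e1 : w[j - p]? = w[(j - p) + p]? := hp _ h1
    have e2 : w[j - p]? = w[(j - p) + q]? := hq _ h2
    have e3 : (j - p) + p = j := by omega
    have e4 : (j - p) + q = j + (q - p) := by omega
    rw [e3] at e1; rw [e4] at e2
    rw [← e1, e2]

lemma per_gcd {α : Type*} (w : List α) : ∀ n p q : ℕ, p + q ≤ n → p + q ≤ w.length →
    HasPer w p → HasPer w q → HasPer w (Nat.gcd p q) := by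
  intro n
  induction n with
  | zero =>
    intro p q h1 h2 hp hq
    have : p = 0 ∧ q = 0 := by omega
    simpa [this.1, this.2] using hp
  | succ n ih =>
    intro p q h1 h2 hp hq
    rcases Nat.eq_zero_or_pos p with hp0 | hp0
    · simpa [hp0] using hq
    rcases Nat.eq_zero_or_pos q with hq0 | hq0
    · simpa [hq0] using hp
    rcases le_total p q with hle | hle
    · have hsub := per_sub w p q hle h2 hp hq
      have hg : Nat.gcd p (q - p) = Nat.gcd p q := by
        rw [Nat.gcd_comm p (q-p), Nat.gcd_comm p q]
        exact Nat.gcd_sub_self_left hle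
      rw [← hg]
      exact ih p (q - p) (by omega) (by omega) hp hsub
    · have hsub := per_sub w q p hle (by omega) hq hp
      have hg : Nat.gcd (p - q) q = Nat.gcd p q := Nat.gcd_sub_self_left hle
      rw [← hg]
      exact ih (p - q) q (by omega) (by omega) hsub hq


/-- Structure of autocorrelations: if `w` has length `k`, some index
`1 ≤ i ≤ k−1` has `b_i = 1`, and `i_m` is the largest such index, then (a) every
`1 ≤ i ≤ k−1` with `b_i = 1` satisfies `i < k − i_m` or `i = k − m·(k − i_m)` for some
positive integer `m`; and (b) conversely every `1 ≤ i ≤ k−1` of the form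
`i = k − m·(k − i_m)` with `m` a positive integer has `b_i = 1`. -/
theorem stmt16 {α : Type*} [DecidableEq α] (k : ℕ) (w : List α) (hwlen : w.length = k)
    (im : ℕ) (him1 : 1 ≤ im) (him2 : im ≤ k - 1) (himb : acorrBit w im = 1)
    (himmax : ∀ i : ℕ, 1 ≤ i → i ≤ k - 1 → acorrBit w i = 1 → i ≤ im) :
    (∀ i : ℕ, 1 ≤ i → i ≤ k - 1 → acorrBit w i = 1 →
      i < k - im ∨ ∃ m : ℕ, 0 < m ∧ (i : ℤ) = (k : ℤ) - m * ((k : ℤ) - im)) ∧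
    (∀ i : ℕ, 1 ≤ i → i ≤ k - 1 →
      (∃ m : ℕ, 0 < m ∧ (i : ℤ) = (k : ℤ) - m * ((k : ℤ) - im)) → acorrBit w i = 1) := by
  have hk2 : 2 ≤ k := by omega
  have bit_iff : ∀ i : ℕ, i ≤ k → (acorrBit w i = 1 ↔ HasPer w (k - i)) := by
    intro i hi
    rw [acorrBit]
    constructor
    · intro h
      have hcond : w.take i = w.drop (w.length - i) := by
        by_contra hc; rw [if_neg hc] at h; exact absurd h (by norm_num)
      have := (border_iff_per w i (by omega)).mp hcond
      rwa [hwlen] at this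
    · intro h
      rw [if_pos ((border_iff_per w i (by omega)).mpr (by rwa [hwlen]))]
  have hper_p : HasPer w (k - im) := (bit_iff im (by omega)).mp himb
  have hp1 : 1 ≤ k - im := by omega
  constructor
  · intro i h1 h2 hb
    by_cases hcase : i < k - im
    · exact Or.inl hcase
    · right
      have hq1 : 1 ≤ k - i := by omega
      have hqim : k - i ≤ im := by omega
      have hper_q : HasPer w (k - i) := (bit_iff i (by omega)).mp hb
      have hsum : (k - im) + (k - i) ≤ w.length := by omega
      have hperg : HasPer w (Nat.gcd (k - im) (k - i)) :=
        per_gcd w _ _ _ le_rfl hsum hper_p hper_q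
      obtain ⟨g, hgdef⟩ : ∃ g, g = Nat.gcd (k - im) (k - i) := ⟨_, rfl⟩
      have hg1 : 1 ≤ g := hgdef ▸ Nat.gcd_pos_of_pos_left _ (by omega)
      have hgp : g ≤ k - im := hgdef ▸ Nat.le_of_dvd (by omega) (Nat.gcd_dvd_left _ _)
      have hbit : acorrBit w (k - g) = 1 := by
        rw [bit_iff (k - g) (by omega)]
        have h : k - (k - g) = g := by omega
        rw [h, hgdef]; exact hperg
      have hle : k - g ≤ im := himmax (k - g) (by omega) (by omega) hbit
      have hgeq : g = k - im := by omega
      have hdvd : (k - im) ∣ (k - i) := by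
        rw [← hgeq, hgdef]; exact Nat.gcd_dvd_right _ _
      refine ⟨(k - i) / (k - im), Nat.div_pos (Nat.le_of_dvd (by omega) hdvd) (by omega), ?_⟩
      have e : (k : ℤ) - im = ((k - im : ℕ) : ℤ) := by omega
      have hmn : ((((k - i) / (k - im) : ℕ)) : ℤ) * ((k - im : ℕ) : ℤ) = ((k - i : ℕ) : ℤ) := by
        exact_mod_cast Nat.div_mul_cancel hdvd
      rw [e, hmn]
      omega
  · rintro i h1 h2 ⟨m, hm, heq⟩
    have himk : im ≤ k := by omega
    have e : (k : ℤ) - im = ((k - im : ℕ) : ℤ) := by omega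
    rw [e] at heq
    have e2 : ((m * (k - im) : ℕ) : ℤ) = (m : ℤ) * ((k - im : ℕ) : ℤ) := by push_cast; ring
    rw [← e2] at heq
    have hiN : i + m * (k - im) = k := by omega
    have hper : HasPer w (m * (k - im)) := per_mul w (k - im) m hper_p
    rw [bit_iff i (by omega)]
    have h3 : k - i = m * (k - im) := by omega
    rwa [h3]
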